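/- If G is an n-vertex planar graph with a vertex v of degree at most 2 such that G - v has exactly 2 blocks, one of which has at least 6 vertices, and G contains no Theta graph on 6 vertices, then e(G) < (18/7)n - 48/7, assuming the inductive bound e(B) ≤ (18m - 38)/7 holds for any Θ₆-free 2-connected planar graph B on m ≥ 6 vertices. -/

import Mathlib

open SimpleGraph

/-- `H` is a minor of `G`: there is an assignment of disjoint connected branch sets
of `G` to the vertices of `H` realizing all edges of `H`. -/
def HasMinor {V : Type*} {W : Type*} (G : SimpleGraph V) (H : SimpleGraph W) : Prop :=
  ∃ f : V → Option W,
    (∀ w : W, ∃ v, f v = some w) ∧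
    (∀ w : W, (G.induce {v | f v = some w}).Preconnected) ∧
    (∀ w₁ w₂ : W, H.Adj w₁ w₂ →
      ∃ v₁ v₂, f v₁ = some w₁ ∧ f v₂ = some w₂ ∧ G.Adj v₁ v₂)

/-- Planarity, via Wagner's theorem: no `K₅` minor and no `K₃,₃` minor. -/
def IsPlanar {V : Type*} (G : SimpleGraph V) : Prop :=
  ¬ HasMinor G (completeGraph (Fin 5)) ∧
    ¬ HasMinor G (completeBipartiteGraph (Fin 3) (Fin 3))

/-- `G` contains a Theta graph on 6 vertices: a 6-cycle together with a chord
joining two non-consecutive vertices of the cycle. -/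
def HasTheta6 {V : Type*} (G : SimpleGraph V) : Prop :=
  ∃ v : Fin 6 → V, Function.Injective v ∧
    (∀ i : Fin 6, G.Adj (v i) (v (i + 1))) ∧
    ∃ i j : Fin 6, i ≠ j ∧ j ≠ i + 1 ∧ i ≠ j + 1 ∧ G.Adj (v i) (v j)

/-- A graph is 2-connected: at least 3 vertices, and removing any single
vertex leaves a connected graph. -/
def IsTwoConnected {V : Type*} [Fintype V] (G : SimpleGraph V) : Prop :=
  3 ≤ Fintype.card V ∧ G.Connected ∧
    ∀ v : V, (G.induce {u : V | u ≠ v}).Connected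

/-- A set of vertices inducing a connected subgraph which stays connected
(in the weak sense of `Preconnected`) after deleting any one of its vertices. -/
def IsTwoConnSet {V : Type*} (G : SimpleGraph V) (B : Set V) : Prop :=
  B.Nonempty ∧ (G.induce B).Preconnected ∧
    ∀ v ∈ B, (G.induce (B \ {v})).Preconnected

/-- A block of `G`: a maximal subgraph without a cut vertex, described by
its vertex set. -/
def IsBlock {V : Type*} (G : SimpleGraph V) (B : Set V) : Prop :=
  IsTwoConnSet G B ∧ ∀ C : Set V, IsTwoConnSet G C → B ⊆ C → B = C

section AuxTheta6
variable {V : Type*} {G : SimpleGraph V}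

lemma precon_subsingleton {S : Set V} (h : S.Subsingleton) : (G.induce S).Preconnected := by
  intro x y
  have : x = y := Subtype.ext (h x.2 y.2)
  rw [this]

lemma reach_mono {S T : Set V} (hST : S ⊆ T) {a b : V} (ha : a ∈ S) (hb : b ∈ S)
    (hr : (G.induce S).Reachable ⟨a, ha⟩ ⟨b, hb⟩) :
    (G.induce T).Reachable ⟨a, hST ha⟩ ⟨b, hST hb⟩ :=
  hr.map (SimpleGraph.induceHomOfLE G hST).toHom

lemma precon_union {A B : Set V} (hA : (G.induce A).Preconnected)
    (hB : (G.induce B).Preconnected) (hAB : (A ∩ B).Nonempty) :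
    (G.induce (A ∪ B)).Preconnected := by
  obtain ⟨c, hcA, hcB⟩ := hAB
  have key : ∀ z : V, ∀ hz : z ∈ A ∪ B,
      (G.induce (A ∪ B)).Reachable ⟨z, hz⟩ ⟨c, Or.inl hcA⟩ := by
    intro z hz
    rcases hz with hz | hz
    · exact reach_mono Set.subset_union_left hz hcA (hA ⟨z, hz⟩ ⟨c, hcA⟩)
    · exact reach_mono Set.subset_union_right hz hcB (hB ⟨z, hz⟩ ⟨c, hcB⟩)
  rintro ⟨x, hx⟩ ⟨y, hy⟩
  exact (key x hx).trans (key y hy).symm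

lemma twoconn_union {A B : Set V} (hA : IsTwoConnSet G A) (hB : IsTwoConnSet G B)
    {a b : V} (ha : a ∈ A ∩ B) (hb : b ∈ A ∩ B) (hab : a ≠ b) :
    IsTwoConnSet G (A ∪ B) := by
  refine ⟨hA.1.mono Set.subset_union_left, precon_union hA.2.1 hB.2.1 ⟨a, ha⟩, ?_⟩
  intro x hx
  rw [Set.union_diff_distrib]
  have hA' : (G.induce (A \ {x})).Preconnected := by
    by_cases hxA : x ∈ A
    · exact hA.2.2 x hxA
    · rw [Set.diff_singleton_eq_self hxA]; exact hA.2.1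
  have hB' : (G.induce (B \ {x})).Preconnected := by
    by_cases hxB : x ∈ B
    · exact hB.2.2 x hxB
    · rw [Set.diff_singleton_eq_self hxB]; exact hB.2.1
  apply precon_union hA' hB'
  rcases eq_or_ne a x with rfl | hax
  · exact ⟨b, ⟨hb.1, hab.symm⟩, ⟨hb.2, hab.symm⟩⟩
  · exact ⟨a, ⟨ha.1, hax⟩, ⟨ha.2, hax⟩⟩

lemma block_inter_subsingleton {B₁ B₂ : Set V} (h₁ : IsBlock G B₁) (h₂ : IsBlock G B₂)
    (hne : B₁ ≠ B₂) : (B₁ ∩ B₂).Subsingleton := by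
  intro a ha b hb
  by_contra hab
  have hu : IsTwoConnSet G (B₁ ∪ B₂) := twoconn_union h₁.1 h₂.1 ha hb hab
  have e1 : B₁ = B₁ ∪ B₂ := h₁.2 _ hu Set.subset_union_left
  have e2 : B₂ = B₁ ∪ B₂ := h₂.2 _ hu Set.subset_union_right
  exact hne (e1.trans e2.symm)

lemma exists_block [Finite V] {C : Set V} (hC : IsTwoConnSet G C) :
    ∃ B, IsBlock G B ∧ C ⊆ B := by
  obtain ⟨D, ⟨hD, hCD⟩, hmax⟩ := Set.Finite.exists_maximalFor id
    {D | IsTwoConnSet G D ∧ C ⊆ D} (Set.toFinite _) ⟨C, hC, subset_rfl⟩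
  exact ⟨D, ⟨hD, fun E hE hDE => le_antisymm hDE (hmax ⟨hE, hCD.trans hDE⟩ hDE)⟩, hCD⟩

lemma singleton_twoconn (u : V) : IsTwoConnSet G {u} := by
  refine ⟨⟨u, rfl⟩, precon_subsingleton Set.subsingleton_singleton, ?_⟩
  intro x hx
  apply precon_subsingleton
  exact Set.Subsingleton.anti Set.subsingleton_singleton Set.diff_subset

lemma pair_twoconn {a b : V} (h : G.Adj a b) : IsTwoConnSet G {a, b} := by
  have hne := h.ne
  refine ⟨⟨a, Or.inl rfl⟩, ?_, ?_⟩
  · rintro ⟨x, hx⟩ ⟨y, hy⟩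
    rcases hx with rfl | rfl <;> rcases hy with rfl | rfl
    · rfl
    · exact Adj.reachable (by exact h)
    · exact Adj.reachable (by exact h.symm)
    · rfl
  · intro x hx
    apply precon_subsingleton
    intro p hp q hq
    rcases hx with rfl | rfl <;>
    · simp only [Set.mem_diff, Set.mem_insert_iff, Set.mem_singleton_iff] at hp hq
      obtain ⟨hp1, hp2⟩ := hp
      obtain ⟨hq1, hq2⟩ := hq
      aesop

noncomputable def induceInduceIso (G : SimpleGraph V) (S : Set V) (T : Set ↥S) :
    ((G.induce S).induce T) ≃g G.induce (Subtype.val '' T) where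
  toEquiv := Equiv.Set.image Subtype.val T Subtype.val_injective
  map_rel_iff' := by
    intro a b
    simp [Equiv.Set.image, Equiv.Set.imageOfInjOn, comap_adj]

lemma precon_image {S : Set V} {T : Set ↥S} (h : ((G.induce S).induce T).Preconnected) :
    (G.induce (Subtype.val '' T)).Preconnected :=
  ((induceInduceIso G S T).preconnected_iff).mp h

lemma twoConnSet_image {S : Set V} {T : Set ↥S} (h : IsTwoConnSet (G.induce S) T) :
    IsTwoConnSet G (Subtype.val '' T) := by
  obtain ⟨hne, hpre, hdel⟩ := h
  refine ⟨hne.image _, precon_image hpre, ?_⟩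
  rintro x ⟨y, hy, rfl⟩
  have : (Subtype.val '' T) \ {(y : V)} = Subtype.val '' (T \ {y}) := by
    rw [Set.image_diff Subtype.val_injective, Set.image_singleton]
  rw [this]
  exact precon_image (hdel y hy)

lemma hasMinor_induce {S : Set V} {W : Type*} {H : SimpleGraph W}
    (h : HasMinor (G.induce S) H) : HasMinor G H := by
  classical
  obtain ⟨f, hsurj, hconn, hadj⟩ := h
  refine ⟨fun x => if hx : x ∈ S then f ⟨x, hx⟩ else none, ?_, ?_, ?_⟩
  · intro w
    obtain ⟨y, hy⟩ := hsurj w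
    exact ⟨y.1, by simp [y.2, hy]⟩
  · intro w
    have hset : {x : V | (if hx : x ∈ S then f ⟨x, hx⟩ else none) = some w}
        = Subtype.val '' {y : ↥S | f y = some w} := by
      ext x
      constructor
      · intro hx
        by_cases h' : x ∈ S
        · exact ⟨⟨x, h'⟩, by simpa [h'] using hx, rfl⟩
        · simp [h'] at hx
      · rintro ⟨y, hy, rfl⟩
        simpa [y.2] using hy
    rw [hset]
    exact precon_image (hconn w)
  · intro w₁ w₂ hw
    obtain ⟨a, b, ha, hb, hab⟩ := hadj w₁ w₂ hw
    exact ⟨a.1, b.1, by simp [a.2, ha], by simp [b.2, hb], hab⟩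

lemma isPlanar_induce {S : Set V} (h : IsPlanar G) : IsPlanar (G.induce S) :=
  ⟨fun hm => h.1 (hasMinor_induce hm), fun hm => h.2 (hasMinor_induce hm)⟩

lemma hasTheta6_induce {S : Set V} (h : HasTheta6 (G.induce S)) : HasTheta6 G := by
  obtain ⟨u, hinj, hcyc, i, j, h1, h2, h3, hadj⟩ := h
  exact ⟨fun t => (u t).1, Subtype.val_injective.comp hinj, fun t => hcyc t,
    i, j, h1, h2, h3, hadj⟩

lemma twoconnset_graph {A : Set V} [Fintype ↥A] (h : IsTwoConnSet G A)
    (h3 : 3 ≤ A.ncard) : IsTwoConnected (G.induce A) := by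
  obtain ⟨hne, hpre, hdel⟩ := h
  have hcardA : Fintype.card ↥A = A.ncard := by
    rw [← Nat.card_coe_set_eq, Nat.card_eq_fintype_card]
  haveI : Nonempty ↥A := hne.to_subtype
  refine ⟨by omega, ⟨hpre⟩, ?_⟩
  intro x
  have himg : Subtype.val '' {u : ↥A | u ≠ x} = A \ {(x : V)} := by
    ext y
    simp only [Set.mem_image, Set.mem_setOf_eq, Set.mem_diff, Set.mem_singleton_iff]
    constructor
    · rintro ⟨u, hu, rfl⟩
      exact ⟨u.2, fun hy => hu (Subtype.ext hy)⟩
    · rintro ⟨hy, hyx⟩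
      exact ⟨⟨y, hy⟩, fun hc => hyx (congrArg Subtype.val hc), rfl⟩
  have hp : ((G.induce A).induce {u : ↥A | u ≠ x}).Preconnected := by
    rw [(induceInduceIso G A {u : ↥A | u ≠ x}).preconnected_iff, himg]
    exact hdel x.1 x.2
  obtain ⟨b, hb, hbx⟩ := Set.exists_ne_of_one_lt_ncard (show 1 < A.ncard by omega) x.1
  haveI : Nonempty ↥{u : ↥A | u ≠ x} := ⟨⟨⟨b, hb⟩, fun hc => hbx (congrArg Subtype.val hc)⟩⟩
  exact ⟨hp⟩

lemma ncard_incidence (G : SimpleGraph V) (v : V) :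
    {e ∈ G.edgeSet | v ∈ e}.ncard = (G.neighborSet v).ncard := by
  classical
  rw [← Nat.card_coe_set_eq, ← Nat.card_coe_set_eq]
  exact Nat.card_congr (G.incidenceSetEquivNeighborSet v)

lemma ncard_edges_in_le [Fintype V] (G : SimpleGraph V) (A : Set V) :
    {e ∈ G.edgeSet | ∀ x ∈ e, x ∈ A}.ncard ≤ (G.induce A).edgeSet.ncard := by
  classical
  have hsub : {e ∈ G.edgeSet | ∀ x ∈ e, x ∈ A}
      ⊆ Sym2.map Subtype.val '' (G.induce A).edgeSet := by
    rintro e ⟨he, hall⟩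
    revert he hall
    refine Sym2.ind (fun a b => ?_) e
    intro he hall
    have ha : a ∈ A := hall a (Sym2.mem_mk_left a b)
    have hb : b ∈ A := hall b (Sym2.mem_mk_right a b)
    refine ⟨s(⟨a, ha⟩, ⟨b, hb⟩), ?_, by simp⟩
    exact (mem_edgeSet _).mpr ((mem_edgeSet G).mp he)
  calc {e ∈ G.edgeSet | ∀ x ∈ e, x ∈ A}.ncard
      ≤ (Sym2.map Subtype.val '' (G.induce A).edgeSet).ncard :=
        Set.ncard_le_ncard hsub (Set.toFinite _)
    _ = (G.induce A).edgeSet.ncard :=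
        Set.ncard_image_of_injective _ (Sym2.map.injective Subtype.val_injective)

lemma edgeSet_ncard_le_choose {W : Type*} [Fintype W] (G : SimpleGraph W) :
    G.edgeSet.ncard ≤ (Fintype.card W).choose 2 := by
  classical
  have h1 : G.edgeSet ⊆ {e : Sym2 W | ¬ e.IsDiag} :=
    fun e he => G.not_isDiag_of_mem_edgeSet he
  have h2 : {e : Sym2 W | ¬ e.IsDiag}.ncard = (Fintype.card W).choose 2 := by
    rw [← Nat.card_coe_set_eq, Nat.card_eq_fintype_card]
    exact Sym2.card_subtype_not_diag
  exact h2 ▸ Set.ncard_le_ncard h1 (Set.toFinite _)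

lemma complete_of_ncard_edgeSet {W : Type*} [Fintype W] (G : SimpleGraph W)
    (h : (Fintype.card W).choose 2 ≤ G.edgeSet.ncard) :
    ∀ a b : W, a ≠ b → G.Adj a b := by
  classical
  have h1 : G.edgeSet ⊆ {e : Sym2 W | ¬ e.IsDiag} :=
    fun e he => G.not_isDiag_of_mem_edgeSet he
  have h2 : {e : Sym2 W | ¬ e.IsDiag}.ncard = (Fintype.card W).choose 2 := by
    rw [← Nat.card_coe_set_eq, Nat.card_eq_fintype_card]
    exact Sym2.card_subtype_not_diag
  have heq : G.edgeSet = {e : Sym2 W | ¬ e.IsDiag} :=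
    Set.eq_of_subset_of_ncard_le h1 (by omega) (Set.toFinite _)
  intro a b hab
  have : s(a, b) ∈ {e : Sym2 W | ¬ e.IsDiag} := by simpa using hab
  rw [← heq] at this
  exact (mem_edgeSet G).mp this

lemma hasMinor_complete_five {A : Set V} [Fintype ↥A] (hcard : Fintype.card ↥A = 5)
    (hcomp : ∀ a b : ↥A, a ≠ b → G.Adj a.1 b.1) :
    HasMinor G (completeGraph (Fin 5)) := by
  classical
  have e := Fintype.equivFinOfCardEq hcard
  refine ⟨fun x => if hx : x ∈ A then some (e ⟨x, hx⟩) else none, ?_, ?_, ?_⟩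
  · intro w
    refine ⟨(e.symm w).1, ?_⟩
    simp [(e.symm w).2]
  · intro w
    apply precon_subsingleton
    intro p hp q hq
    simp only [Set.mem_setOf_eq] at hp hq
    by_cases hpA : p ∈ A
    · by_cases hqA : q ∈ A
      · rw [dif_pos hpA] at hp
        rw [dif_pos hqA] at hq
        have : (⟨p, hpA⟩ : ↥A) = ⟨q, hqA⟩ := e.injective (by
          simp only [Option.some_inj] at hp hq; rw [hp, hq])
        exact congrArg Subtype.val this
      · rw [dif_neg hqA] at hq; exact absurd hq (by simp)
    · rw [dif_neg hpA] at hp; exact absurd hp (by simp)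
  · intro w₁ w₂ hw
    have hne : w₁ ≠ w₂ := hw
    refine ⟨(e.symm w₁).1, (e.symm w₂).1, by simp [(e.symm w₁).2],
      by simp [(e.symm w₂).2], ?_⟩
    exact hcomp _ _ (fun hc => hne (by simpa using congrArg e hc))

end AuxTheta6

theorem theta6_degree_two_two_blocks {V : Type} [Fintype V] (n : ℕ)
    (hind : ∀ (W : Type) [Fintype W] (B : SimpleGraph W),
      6 ≤ Fintype.card W → IsPlanar B → ¬ HasTheta6 B → IsTwoConnected B →
        (B.edgeSet.ncard : ℚ) ≤ (18 * Fintype.card W - 38) / 7)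
    (G : SimpleGraph V) (hcard : Fintype.card V = n)
    (hplanar : IsPlanar G) (hfree : ¬ HasTheta6 G)
    (v : V) (hdeg : (G.neighborSet v).ncard ≤ 2)
    (B₁ B₂ : Set {u : V // u ≠ v})
    (hB₁ : IsBlock (G.induce {u : V | u ≠ v}) B₁)
    (hB₂ : IsBlock (G.induce {u : V | u ≠ v}) B₂) (hne : B₁ ≠ B₂)
    (honly : ∀ B, IsBlock (G.induce {u : V | u ≠ v}) B → B = B₁ ∨ B = B₂)
    (hbig : 6 ≤ B₁.ncard) :
    (G.edgeSet.ncard : ℚ) < 18 / 7 * n - 48 / 7 := by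
  classical
  set S : Set V := {u : V | u ≠ v} with hS
  set A : Set V := Subtype.val '' B₁ with hA
  set B : Set V := Subtype.val '' B₂ with hB
  have hAtc : IsTwoConnSet G A := twoConnSet_image hB₁.1
  have hBtc : IsTwoConnSet G B := twoConnSet_image hB₂.1
  set m : ℕ := A.ncard with hm
  set k : ℕ := B.ncard with hk
  have hm6 : 6 ≤ m := by
    rw [hm, hA, Set.ncard_image_of_injective _ Subtype.val_injective]; exact hbig
  have hk1 : 1 ≤ k := (Set.ncard_pos (Set.toFinite _)).mpr hBtc.1
  -- every vertex of S lies in B₁ ∪ B₂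
  have hcover : B₁ ∪ B₂ = Set.univ := by
    ext u
    simp only [Set.mem_univ, iff_true]
    obtain ⟨Bl, hBl, hsub⟩ := exists_block (G := G.induce S) (singleton_twoconn u)
    rcases honly Bl hBl with rfl | rfl
    · exact Or.inl (hsub rfl)
    · exact Or.inr (hsub rfl)
  have hABc : A ∪ B = {v}ᶜ := by
    rw [hA, hB, ← Set.image_union, hcover, Set.image_univ, Subtype.range_coe_subtype]
    ext u
    simp only [Set.mem_setOf_eq, Set.mem_compl_iff, Set.mem_singleton_iff]
  -- intersection has at most one vertex
  have hABi : (A ∩ B).ncard ≤ 1 := by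
    rw [hA, hB, ← Set.image_inter Subtype.val_injective]
    exact (Set.ncard_le_one (Set.toFinite _)).mpr
      ((block_inter_subsingleton hB₁ hB₂ hne).image _)
  set i : ℕ := (A ∩ B).ncard with hi
  -- vertex count
  have hnsum : n + i = m + k + 1 := by
    have e1 : ({v} : Set V).ncard + ({v}ᶜ : Set V).ncard = Nat.card V :=
      Set.ncard_add_ncard_compl _
    rw [Set.ncard_singleton, Nat.card_eq_fintype_card, hcard] at e1
    have e2 : (A ∪ B).ncard + (A ∩ B).ncard = A.ncard + B.ncard :=
      Set.ncard_union_add_ncard_inter _ _ (Set.toFinite _) (Set.toFinite _)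
    rw [hABc] at e2
    omega
  -- when k = 1 the blocks are disjoint
  have hk1i : k = 1 → i = 0 := by
    intro hk1'
    by_contra hi0
    obtain ⟨x, hxA, hxB⟩ : (A ∩ B).Nonempty := by
      rw [← Set.ncard_pos (Set.toFinite _)]; omega
    obtain ⟨a, ha⟩ := Set.ncard_eq_one.mp (hk.symm.trans hk1')
    have hxa : x = a := by rwa [ha, Set.mem_singleton_iff] at hxB
    have hBsubA : B ⊆ A := by
      rw [ha]
      intro y hy
      have : y = a := hy
      rw [this, ← hxa]
      exact hxA
    have h21 : B₂ ⊆ B₁ := (Set.image_subset_image_iff Subtype.val_injective).mp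
      (by rw [← hA, ← hB]; exact hBsubA)
    exact hne ((hB₂.2 B₁ hB₁.1 h21).symm)
  -- edge classification
  have hedge : G.edgeSet ⊆ {e ∈ G.edgeSet | v ∈ e} ∪ {e ∈ G.edgeSet | ∀ x ∈ e, x ∈ A}
      ∪ {e ∈ G.edgeSet | ∀ x ∈ e, x ∈ B} := by
    intro e he
    revert he
    refine Sym2.ind (fun a b => ?_) e
    intro he
    have hadj : G.Adj a b := (mem_edgeSet G).mp he
    by_cases hv : v ∈ s(a, b)
    · exact Or.inl (Or.inl ⟨he, hv⟩)
    have haS : a ∈ S := fun h => hv (Sym2.mem_iff.mpr (Or.inl h.symm))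
    have hbS : b ∈ S := fun h => hv (Sym2.mem_iff.mpr (Or.inr h.symm))
    have hadjS : (G.induce S).Adj ⟨a, haS⟩ ⟨b, hbS⟩ := hadj
    obtain ⟨Bl, hBl, hsub⟩ := exists_block (pair_twoconn hadjS)
    rcases honly Bl hBl with rfl | rfl
    · refine Or.inl (Or.inr ⟨he, ?_⟩)
      intro x hx
      rcases Sym2.mem_iff.mp hx with rfl | rfl
      · exact ⟨⟨x, haS⟩, hsub (Or.inl rfl), rfl⟩
      · exact ⟨⟨x, hbS⟩, hsub (Or.inr rfl), rfl⟩
    · refine Or.inr ⟨he, ?_⟩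
      intro x hx
      rcases Sym2.mem_iff.mp hx with rfl | rfl
      · exact ⟨⟨x, haS⟩, hsub (Or.inl rfl), rfl⟩
      · exact ⟨⟨x, hbS⟩, hsub (Or.inr rfl), rfl⟩
  -- edge count
  haveI fA : Fintype ↥A := (Set.toFinite A).fintype
  haveI fB : Fintype ↥B := (Set.toFinite B).fintype
  set eA : ℕ := (G.induce A).edgeSet.ncard with heA
  set eB : ℕ := (G.induce B).edgeSet.ncard with heB
  have hEcount : G.edgeSet.ncard ≤ 2 + eA + eB := by
    have h1 : G.edgeSet.ncard ≤ ({e ∈ G.edgeSet | v ∈ e} ∪ {e ∈ G.edgeSet | ∀ x ∈ e, x ∈ A}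
        ∪ {e ∈ G.edgeSet | ∀ x ∈ e, x ∈ B}).ncard :=
      Set.ncard_le_ncard hedge (Set.toFinite _)
    have h2 := Set.ncard_union_le ({e ∈ G.edgeSet | v ∈ e} ∪ {e ∈ G.edgeSet | ∀ x ∈ e, x ∈ A})
      {e ∈ G.edgeSet | ∀ x ∈ e, x ∈ B}
    have h3 := Set.ncard_union_le {e ∈ G.edgeSet | v ∈ e} {e ∈ G.edgeSet | ∀ x ∈ e, x ∈ A}
    have h4 : {e ∈ G.edgeSet | v ∈ e}.ncard ≤ 2 := by
      rw [ncard_incidence]; exact hdeg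
    have h5 := ncard_edges_in_le G A
    have h6 := ncard_edges_in_le G B
    omega
  have hcardA : Fintype.card ↥A = m := by
    rw [hm, ← Nat.card_coe_set_eq, Nat.card_eq_fintype_card]
  have hcardB : Fintype.card ↥B = k := by
    rw [hk, ← Nat.card_coe_set_eq, Nat.card_eq_fintype_card]
  -- bound for A
  have hAq : (eA : ℚ) ≤ (18 * m - 38) / 7 := by
    have := hind ↥A (G.induce A) (by omega) (isPlanar_induce hplanar)
      (fun h => hfree (hasTheta6_induce h)) (twoconnset_graph hAtc (by omega))
    rwa [hcardA] at this
  -- bound for B and conclusion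
  have hnq : (n : ℚ) + i = m + k + 1 := by exact_mod_cast hnsum
  have hiq : (i : ℚ) ≤ 1 := by exact_mod_cast hABi
  have hEq : (G.edgeSet.ncard : ℚ) ≤ 2 + eA + eB := by exact_mod_cast hEcount
  have hmq : (6 : ℚ) ≤ m := by exact_mod_cast hm6
  rcases le_or_gt 6 k with hk6 | hk5
  · have hBq : (eB : ℚ) ≤ (18 * k - 38) / 7 := by
      have := hind ↥B (G.induce B) (by omega) (isPlanar_induce hplanar)
        (fun h => hfree (hasTheta6_induce h)) (twoconnset_graph hBtc (by omega))
      rwa [hcardB] at this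
    have hkq : (6 : ℚ) ≤ k := by exact_mod_cast hk6
    linarith
  · -- small second block
    have hch : eB ≤ k.choose 2 := by
      have := edgeSet_ncard_le_choose (G.induce B)
      rwa [hcardB] at this
    have h9 : k = 5 → eB ≤ 9 := by
      intro hk5'
      by_contra h10
      have h10' : (Fintype.card ↥B).choose 2 ≤ eB := by
        rw [hcardB, hk5']
        have hc : Nat.choose 5 2 = 10 := by decide
        omega
      have hcomp := complete_of_ncard_edgeSet (G.induce B) h10'
      exact hplanar.1 (hasMinor_complete_five (by rw [hcardB, hk5'])
        (fun a b hab => hcomp a b hab))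
    interval_cases k
    · have hi0 : i = 0 := hk1i rfl
      have heB0 : eB ≤ 0 := by simpa using hch
      have : (eB : ℚ) ≤ 0 := by exact_mod_cast heB0
      rw [hi0] at hnq
      push_cast at hnq
      linarith
    · have heB' : (eB : ℚ) ≤ 1 := by exact_mod_cast hch
      push_cast at hnq
      linarith
    · have heB' : (eB : ℚ) ≤ 3 := by exact_mod_cast hch
      push_cast at hnq
      linarith
    · have heB' : (eB : ℚ) ≤ 6 := by exact_mod_cast hch
      push_cast at hnq
      linarith
    · have heB' : (eB : ℚ) ≤ 9 := by exact_mod_cast h9 rfl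
      push_cast at hnq
      linarith
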